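/- Let k ≥ 2 and let G be a graph with at least C(k,2) + 1 edges. Then either (i) G contains an induced subgraph on k+1 vertices with minimum degree at least 1, or (ii) G contains a matching M with |M| = e(G), i.e., the edge set of G is itself a matching of size e(G). -/

import Mathlib

open SimpleGraph

/-- `H` contains a copy of `G`, i.e. there is an injective graph homomorphism `G →g H`. -/
def ContainsCopy {α β : Type*} (G : SimpleGraph α) (H : SimpleGraph β) : Prop :=
  ∃ f : G →g H, Function.Injective f

/-- `F ⟶ (G, H)` : for every red-blue colouring of the edges of `F` (encoded by the red
subgraph `R ≤ F`, the blue edges being `F \ R`) there is a red copy of `G` or a blue copy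
of `H`. -/
def Arrows {γ α β : Type*} (F : SimpleGraph γ) (G : SimpleGraph α) (H : SimpleGraph β) : Prop :=
  ∀ R : SimpleGraph γ, R ≤ F → ContainsCopy G R ∨ ContainsCopy H (F \ R)

/-- The Ramsey number `r(G, H)` : the least `n` such that `K_n ⟶ (G, H)`. -/
noncomputable def ramseyNumber {α β : Type*} (G : SimpleGraph α) (H : SimpleGraph β) : ℕ :=
  sInf {n : ℕ | Arrows (⊤ : SimpleGraph (Fin n)) G H}

/-- The size Ramsey number `r̂(G, H)` : the least number of edges of a graph `F` with
`F ⟶ (G, H)`. -/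
noncomputable def sizeRamsey {α β : Type*} (G : SimpleGraph α) (H : SimpleGraph β) : ℕ :=
  sInf {m : ℕ | ∃ (N : ℕ) (F : SimpleGraph (Fin N)), Arrows F G H ∧ F.edgeSet.ncard = m}

/-- The restricted size Ramsey number `r̂*(G, H)` : the least number of edges of a graph `F`
on exactly `r(G, H)` vertices with `F ⟶ (G, H)`. -/
noncomputable def restrictedSizeRamsey {α β : Type*} (G : SimpleGraph α) (H : SimpleGraph β) : ℕ :=
  sInf {m : ℕ | ∃ F : SimpleGraph (Fin (ramseyNumber G H)),
    Arrows F G H ∧ F.edgeSet.ncard = m}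

/-- The star `K_{1,k}` with `k` edges. -/
def starGraph (k : ℕ) : SimpleGraph (Fin 1 ⊕ Fin k) := completeBipartiteGraph (Fin 1) (Fin k)



open Classical in
lemma my_shrink {V : Type*} [Fintype V] (G : SimpleGraph V) (X : Set V) (a b c : V)
    (ha : a ∈ X) (hb : b ∈ X) (hc : c ∈ X) (hac : a ≠ c)
    (hba : G.Adj b a) (hbc : G.Adj b c)
    (hmin : ∀ v ∈ X, ∃ u ∈ X, G.Adj v u) :
    ∃ X' ⊆ X, X'.ncard + 1 = X.ncard ∧ ∀ v ∈ X', ∃ u ∈ X', G.Adj v u := by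
  classical
  set H : SimpleGraph V :=
    { Adj := fun x y => x ∈ X ∧ y ∈ X ∧ G.Adj x y
      symm := ⟨fun x y ⟨hx, hy, hxy⟩ => ⟨hy, hx, hxy.symm⟩⟩
      loopless := ⟨fun x ⟨_, _, h⟩ => G.loopless.irrefl x h⟩ } with hH
  have hHadj : ∀ {x y : V}, H.Adj x y ↔ (x ∈ X ∧ y ∈ X ∧ G.Adj x y) :=
    fun {x y} => Iff.rfl
  have hreach_mem' : ∀ u w : V, H.Reachable u w → u ∈ X → w ∈ X := by
    intro u w hr
    obtain ⟨p⟩ := hr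
    induction p with
    | nil => exact id
    | cons h p ih => exact fun _ => ih (hHadj.mp h).2.1
  have hreach_mem : ∀ u : V, H.Reachable b u → u ∈ X := fun u hr => hreach_mem' b u hr hb
  set R : Finset V := Finset.univ.filter (fun u => H.Reachable b u) with hR
  have hbR : b ∈ R := Finset.mem_filter.mpr ⟨Finset.mem_univ b, Reachable.refl b⟩
  obtain ⟨v, hvR, hvmax⟩ := R.exists_max_image (fun u => H.dist b u) ⟨b, hbR⟩
  have hvreach : H.Reachable b v := (Finset.mem_filter.mp hvR).2
  have hvX : v ∈ X := hreach_mem v hvreach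
  have haR : a ∈ R := by
    simp only [hR, Finset.mem_filter, Finset.mem_univ, true_and]
    exact (Adj.reachable (hHadj.mpr ⟨hb, ha, hba⟩))
  have hvb : v ≠ b := by
    intro h
    have h1 : H.dist b a = 1 := dist_eq_one_iff_adj.mpr (hHadj.mpr ⟨hb, ha, hba⟩)
    have := hvmax a haR
    rw [h, SimpleGraph.dist_self] at this
    omega
  refine ⟨X \ {v}, Set.diff_subset, ?_, ?_⟩
  · exact Set.ncard_diff_singleton_add_one hvX X.toFinite
  · rintro u ⟨huX, huv⟩
    simp only [Set.mem_singleton_iff] at huv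
    by_cases hub : u = b
    · subst hub
      by_cases hav : a = v
      · exact ⟨c, ⟨hc, fun h => hac (hav.trans h.symm ▸ rfl)⟩, hbc⟩
      · exact ⟨a, ⟨ha, hav⟩, hba⟩
    · by_cases hr : H.Reachable b u
      · by_cases hex : ∃ w, (w ∈ X ∧ w ≠ v) ∧ G.Adj u w
        · obtain ⟨w, ⟨hw, hwv⟩, hadj⟩ := hex
          exact ⟨w, ⟨hw, hwv⟩, hadj⟩
        · exfalso
          push_neg at hex
          obtain ⟨p, hp⟩ := hr.exists_walk_length_eq_dist
          have hur : u ∈ R := Finset.mem_filter.mpr ⟨Finset.mem_univ u, hr⟩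
          cases hrev : p.reverse with
          | nil => exact hub (by simpa using hrev ▸ rfl)
          | @cons _ x _ h q =>
            have hx : x ∈ X ∧ u ∈ X ∧ G.Adj u x := by
              have := hHadj.mp h
              exact ⟨this.2.1, this.1, this.2.2⟩
            have hxv : x = v := by
              by_contra hxv
              exact hex x ⟨hx.1, hxv⟩ hx.2.2
            have hdist_v : H.dist b v ≤ q.length := by
              rw [← hxv]
              have := SimpleGraph.dist_le q.reverse
              simpa using this
            have hlen : p.length = q.length + 1 := by
              have : p.reverse.length = q.length + 1 := by rw [hrev]; simp
              simpa using this
            have hmaxu := hvmax u hur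
            have hpos : 0 < H.dist b u := hr.pos_dist_of_ne (Ne.symm hub)
            rw [← hp] at hmaxu
            omega
      · obtain ⟨w, hw, hadj⟩ := hmin u huX
        refine ⟨w, ⟨hw, ?_⟩, hadj⟩
        intro hwv
        subst hwv
        exact hr (hvreach.trans (Adj.reachable (hHadj.mpr ⟨hvX, huX, hadj.symm⟩)))


lemma my_grow {V : Type*} [Fintype V] (G : SimpleGraph V) (a b c : V)
    (hac : a ≠ c) (hba : G.Adj b a) (hbc : G.Adj b c) :
    ∀ n, 3 ≤ n → n ≤ {v : V | ∃ u, G.Adj v u}.ncard →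
    ∃ X : Set V, X ⊆ {v : V | ∃ u, G.Adj v u} ∧ (X.ncard = n ∨ X.ncard = n + 1) ∧
      a ∈ X ∧ b ∈ X ∧ c ∈ X ∧ ∀ v ∈ X, ∃ u ∈ X, G.Adj v u := by
  intro n hn
  induction n, hn using Nat.le_induction with
  | base =>
    intro _
    refine ⟨{a, b, c}, ?_, Or.inl ?_, by simp, by simp, by simp, ?_⟩
    · rintro x (rfl | rfl | rfl)
      · exact ⟨b, hba.symm⟩
      · exact ⟨a, hba⟩
      · exact ⟨b, hbc.symm⟩
    · have hab : a ≠ b := hba.ne'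
      have hbc' : b ≠ c := hbc.ne
      rw [Set.ncard_insert_of_notMem (by simp [hab, hac]) (Set.toFinite _),
        Set.ncard_insert_of_notMem (by simp [hbc']) (Set.toFinite _), Set.ncard_singleton]
    · rintro v (rfl | rfl | rfl)
      · exact ⟨b, by simp, hba.symm⟩
      · exact ⟨a, by simp, hba⟩
      · exact ⟨b, by simp, hbc.symm⟩
  | succ n hn3 ih =>
    intro hcard
    obtain ⟨X, hXS, hXcard, haX, hbX, hcX, hmin⟩ := ih (le_trans (Nat.le_succ n) hcard)
    rcases hXcard with hXn | hXn1
    · -- grow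
      have hex : ∃ v ∈ {v : V | ∃ u, G.Adj v u}, v ∉ X := by
        by_contra hcon
        push_neg at hcon
        have : {v : V | ∃ u, G.Adj v u}.ncard ≤ X.ncard :=
          Set.ncard_le_ncard hcon X.toFinite
        omega
      obtain ⟨v, hvS, hvX⟩ := hex
      obtain ⟨u, hadj⟩ := hvS
      by_cases huX : u ∈ X
      · refine ⟨insert v X, ?_, Or.inl ?_, Set.mem_insert_of_mem _ haX,
          Set.mem_insert_of_mem _ hbX, Set.mem_insert_of_mem _ hcX, ?_⟩
        · exact Set.insert_subset ⟨u, hadj⟩ hXS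
        · rw [Set.ncard_insert_of_notMem hvX X.toFinite, hXn]
        · rintro w (rfl | hw)
          · exact ⟨u, Set.mem_insert_of_mem _ huX, hadj⟩
          · obtain ⟨x, hx, hx'⟩ := hmin w hw
            exact ⟨x, Set.mem_insert_of_mem _ hx, hx'⟩
      · refine ⟨insert u (insert v X), ?_, Or.inr ?_, ?_, ?_, ?_, ?_⟩
        · exact Set.insert_subset ⟨v, hadj.symm⟩ (Set.insert_subset ⟨u, hadj⟩ hXS)
        · rw [Set.ncard_insert_of_notMem (by simp [huX, hadj.ne']) (Set.toFinite _),
            Set.ncard_insert_of_notMem hvX X.toFinite, hXn]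
        · exact Set.mem_insert_of_mem _ (Set.mem_insert_of_mem _ haX)
        · exact Set.mem_insert_of_mem _ (Set.mem_insert_of_mem _ hbX)
        · exact Set.mem_insert_of_mem _ (Set.mem_insert_of_mem _ hcX)
        · rintro w (rfl | rfl | hw)
          · exact ⟨v, Set.mem_insert_of_mem _ (Set.mem_insert _ _), hadj.symm⟩
          · exact ⟨u, Set.mem_insert _ _, hadj⟩
          · obtain ⟨x, hx, hx'⟩ := hmin w hw
            exact ⟨x, Set.mem_insert_of_mem _ (Set.mem_insert_of_mem _ hx), hx'⟩
    · exact ⟨X, hXS, Or.inl hXn1, haX, hbX, hcX, hmin⟩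

lemma my_count {V : Type*} [Fintype V] (G : SimpleGraph V) (k : ℕ)
    (hG : k.choose 2 + 1 ≤ G.edgeSet.ncard) :
    k + 1 ≤ {v : V | ∃ u, G.Adj v u}.ncard := by
  classical
  by_contra hcon
  push_neg at hcon
  set S : Set V := {v : V | ∃ u, G.Adj v u} with hS
  have hSk : S.ncard ≤ k := by omega
  set G' : SimpleGraph S := G.comap (Subtype.val : S → V) with hG'
  have himg : G.edgeSet = Sym2.map (Subtype.val : S → V) '' G'.edgeSet := by
    ext e
    constructor
    · intro he
      induction e using Sym2.ind with
      | _ x y =>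
        rw [mem_edgeSet] at he
        exact ⟨s(⟨x, ⟨y, he⟩⟩, ⟨y, ⟨x, he.symm⟩⟩), he, by simp⟩
    · rintro ⟨e', he', rfl⟩
      induction e' using Sym2.ind with
      | _ x y =>
        simp only [Sym2.map_mk, mem_edgeSet]; exact he'
  have hinj : Function.Injective (Sym2.map (Subtype.val : S → V)) :=
    Sym2.map.injective Subtype.val_injective
  have h1 : G.edgeSet.ncard = G'.edgeSet.ncard := by
    rw [himg, Set.ncard_image_of_injective _ hinj]
  have h2 : G'.edgeSet.ncard = G'.edgeFinset.card := by
    rw [Set.ncard_eq_toFinset_card']; congr 1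
  have h3 : (G'.edgeFinset).card ≤ (Fintype.card S).choose 2 :=
    card_edgeFinset_le_card_choose_two
  have h4 : Fintype.card S = S.ncard := by
    rw [← Nat.card_coe_set_eq, Nat.card_eq_fintype_card]
  have h5 : (S.ncard).choose 2 ≤ k.choose 2 := Nat.choose_le_choose 2 hSk
  rw [h4] at h3
  omega

theorem stmt9 {V : Type*} [Fintype V] (k : ℕ) (hk : 2 ≤ k) (G : SimpleGraph V)
    (hG : k.choose 2 + 1 ≤ G.edgeSet.ncard) :
    (∃ X : Set V, X.ncard = k + 1 ∧ ∀ v ∈ X, ∃ u ∈ X, G.Adj v u) ∨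
    (∃ M : Set (Sym2 V), M ⊆ G.edgeSet ∧ M.ncard = G.edgeSet.ncard ∧
      M.Pairwise fun e f => ∀ v : V, v ∈ e → v ∉ f) := by
  classical
  by_cases hM : G.edgeSet.Pairwise fun e f => ∀ v : V, v ∈ e → v ∉ f
  · exact Or.inr ⟨G.edgeSet, subset_rfl, rfl, hM⟩
  · left
    rw [Set.Pairwise] at hM
    push_neg at hM
    obtain ⟨e, he, f, hf, hef, b, hbe, hbf⟩ := hM
    obtain ⟨a, rfl⟩ := Sym2.mem_iff_exists.mp hbe
    obtain ⟨c, rfl⟩ := Sym2.mem_iff_exists.mp hbf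
    rw [mem_edgeSet] at he hf
    have hac : a ≠ c := fun h => hef (by rw [h])
    have hS := my_count G k hG
    obtain ⟨X, _, hXcard, haX, hbX, hcX, hmin⟩ :=
      my_grow G a b c hac he hf (k + 1) (by omega) hS
    rcases hXcard with h | h
    · exact ⟨X, h, hmin⟩
    · obtain ⟨X', _, hc', hmin'⟩ := my_shrink G X a b c haX hbX hcX hac he hf hmin
      exact ⟨X', by omega, hmin'⟩
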